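/- (Main theorem, optimality preservation) Let T' be an operator on Q-functions and α ∈ [0,1) such that for all Q, x, a: (1) T'Q(x,a) ≤ TQ(x,a), and (2) T'Q(x,a) ≥ TQ(x,a) - α[V_Q(x) - Q(x,a)] where V_Q(x) = max_b Q(x,b). Then for any bounded Q0, with Q_{k+1} = T'Q_k and V_k(x) = max_a Q_k(x,a), the sequence V_k(x) converges to V*(x) for every x. -/

import Mathlib

open Filter Topology

/-- If `u (k+1) ≥ c k + α * u k` with `α ∈ [0,1)`, `c k → c∞`, `u k ≤ v k`, `v k → L`,
then `c∞ ≤ (1 - α) * L`. -/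
lemma alpha_rec_limit (α : ℝ) (hα0 : 0 ≤ α) (hα1 : α < 1)
    (u c v : ℕ → ℝ) (cinf L : ℝ)
    (hrec : ∀ k, c k + α * u k ≤ u (k + 1))
    (hc : Tendsto c atTop (nhds cinf))
    (huv : ∀ k, u k ≤ v k)
    (hv : Tendsto v atTop (nhds L)) : cinf ≤ (1 - α) * L := by
  have h1α : (0:ℝ) < 1 - α := by linarith
  set t : ℝ := cinf / (1 - α) with ht
  have htfix : cinf + α * t = t := by rw [ht]; field_simp [h1α.ne']; ring
  suffices hle : t ≤ L by
    have := mul_le_mul_of_nonneg_left hle (le_of_lt h1α)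
    calc cinf = (1 - α) * t := by rw [ht]; field_simp [h1α.ne']
    _ ≤ (1 - α) * L := this
  refine le_of_forall_sub_le (fun ε hε => ?_)
  -- choose K with c k ≥ cinf - (1-α)*ε/2 for k ≥ K
  have hc' : ∀ᶠ k in atTop, cinf - (1 - α) * ε / 2 ≤ c k := by
    have : cinf - (1 - α) * ε / 2 < cinf := by nlinarith
    exact hc.eventually (eventually_ge_nhds this)
  obtain ⟨K, hK⟩ := eventually_atTop.mp hc'
  -- inductive lower bound
  have claim : ∀ n : ℕ, t + α ^ n * (u K - t) - ε / 2 ≤ u (K + n) := by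
    intro n
    induction n with
    | zero => simp; linarith
    | succ n ih =>
        have h0 := hrec (K + n)
        have h1 := hK (K + n) (Nat.le_add_right K n)
        have h2 : α * t + α * (α ^ n * (u K - t)) - α * (ε / 2) ≤ α * u (K + n) := by
          have := mul_le_mul_of_nonneg_left ih hα0
          rw [mul_sub, mul_add] at this
          linarith
        have hKn : K + (n + 1) = (K + n) + 1 := by ring
        rw [hKn]
        have hpow : α ^ (n + 1) * (u K - t) = α * (α ^ n * (u K - t)) := by ring
        have hαε : α * (ε / 2) ≤ ε / 2 := by nlinarith
        linarith
  -- choose N with α^N * |u K - t| ≤ ε/2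
  have hpow0 : Tendsto (fun n : ℕ => α ^ n * |u K - t|) atTop (nhds 0) := by
    simpa using (tendsto_pow_atTop_nhds_zero_of_lt_one hα0 hα1).mul_const |u K - t|
  have hev : ∀ᶠ n : ℕ in atTop, α ^ n * |u K - t| ≤ ε / 2 := by
    have : (0:ℝ) < ε / 2 := by linarith
    exact hpow0.eventually (eventually_le_nhds this)
  obtain ⟨N, hN⟩ := eventually_atTop.mp hev
  have key : ∀ k, K + N ≤ k → t - ε ≤ v k := by
    intro k hk
    have hkK : K ≤ k := le_trans (Nat.le_add_right K N) hk
    obtain ⟨n, rfl⟩ : ∃ n, k = K + n := ⟨k - K, by omega⟩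
    have hnN : N ≤ n := by omega
    have h3 := claim n
    have h4 : α ^ n * |u K - t| ≤ ε / 2 := hN n hnN
    have h5 : -(α ^ n * |u K - t|) ≤ α ^ n * (u K - t) := by
      have : -|u K - t| ≤ u K - t := neg_abs_le _
      nlinarith [pow_nonneg hα0 n]
    have := huv (K + n)
    linarith
  refine ge_of_tendsto hv ?_
  exact eventually_atTop.mpr ⟨K + N, key⟩


/-- (Main theorem, optimality preservation) If `T'Q ≤ TQ` and
`T'Q(x,a) ≥ TQ(x,a) - α [V_Q(x) - Q(x,a)]` pointwise for some `α ∈ [0,1)`,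
then the value functions of the iterates `Q_{k+1} = T'Q_k` converge to `V*`. -/
theorem optimality_preserving_main
    {X A : Type*} [Fintype X] [Fintype A] [Nonempty X] [Nonempty A]
    (P : X → A → X → ℝ) (hP0 : ∀ x a x', 0 ≤ P x a x')
    (hP1 : ∀ x a, ∑ x', P x a x' = 1)
    (R : X → A → ℝ) (γ : ℝ) (hγ0 : 0 ≤ γ) (hγ1 : γ < 1)
    (T T' : (X → A → ℝ) → (X → A → ℝ))
    (hT : ∀ Q x a, T Q x a = R x a + γ * ∑ x', P x a x' * (⨆ b, Q x' b))
    (α : ℝ) (hα0 : 0 ≤ α) (hα1 : α < 1)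
    (h1 : ∀ Q x a, T' Q x a ≤ T Q x a)
    (h2 : ∀ (Q : X → A → ℝ) (x : X) (a : A),
      T' Q x a ≥ T Q x a - α * ((⨆ b, Q x b) - Q x a))
    (Qstar : X → A → ℝ)
    (hQstar : ∀ x a, Qstar x a = R x a + γ * ∑ x', P x a x' * (⨆ b, Qstar x' b))
    (Vstar : X → ℝ) (hVstar : ∀ x, Vstar x = ⨆ a, Qstar x a)
    (Q : ℕ → X → A → ℝ) (hQ : ∀ k, Q (k + 1) = T' (Q k)) :
    ∀ x, Tendsto (fun k => ⨆ a, Q k x a) atTop (nhds (Vstar x)) := by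
  classical
  have hγne : (1:ℝ) - γ ≠ 0 := by linarith
  -- finite sup facts
  have hbddA : ∀ f : A → ℝ, BddAbove (Set.range f) := fun f => (Set.finite_range f).bddAbove
  have hleA : ∀ (f : A → ℝ) (a : A), f a ≤ ⨆ b, f b := fun f a => le_ciSup (hbddA f) a
  have hexA : ∀ f : A → ℝ, ∃ a, (⨆ b, f b) = f a := by
    intro f
    obtain ⟨a, ha⟩ := Finite.exists_max f
    exact ⟨a, le_antisymm (ciSup_le ha) (hleA f a)⟩
  set V : ℕ → X → ℝ := fun k x => ⨆ a, Q k x a with hVdef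
  have hVge : ∀ k x a, Q k x a ≤ V k x := by
    intro k x a; simp only [hVdef]; exact hleA (Q k x) a
  have hVex : ∀ k x, ∃ a, V k x = Q k x a := by
    intro k x; simp only [hVdef]; exact hexA (Q k x)
  -- sum facts
  have hsum_le : ∀ (x : X) (a : A) (f g : X → ℝ), (∀ x', f x' ≤ g x') →
      ∑ x', P x a x' * f x' ≤ ∑ x', P x a x' * g x' := by
    intro x a f g hfg
    exact Finset.sum_le_sum (fun x' _ => mul_le_mul_of_nonneg_left (hfg x') (hP0 x a x'))
  have hsum_const : ∀ (x : X) (a : A) (c : ℝ), ∑ x', P x a x' * c = c := by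
    intro x a c; rw [← Finset.sum_mul, hP1, one_mul]
  have hsum_add : ∀ (x : X) (a : A) (f : X → ℝ) (c : ℝ),
      ∑ x', P x a x' * (f x' + c) = (∑ x', P x a x' * f x') + c := by
    intro x a f c
    have he : ∀ x' ∈ Finset.univ, P x a x' * (f x' + c) = P x a x' * f x' + P x a x' * c :=
      fun x' _ => by ring
    rw [Finset.sum_congr rfl he, Finset.sum_add_distrib, hsum_const x a c]
  -- the two one-step inequalities
  have hup : ∀ k x a, Q (k+1) x a ≤ R x a + γ * ∑ x', P x a x' * V k x' := by
    intro k x a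
    have h := h1 (Q k) x a
    rw [hT] at h
    rw [hQ k]
    simpa only [hVdef] using h
  have hlow : ∀ k x a,
      R x a + γ * (∑ x', P x a x' * V k x') - α * (V k x - Q k x a) ≤ Q (k+1) x a := by
    intro k x a
    have h := h2 (Q k) x a
    rw [hT] at h
    rw [hQ k]
    simpa only [hVdef] using h
  -- Q* facts
  have hQstarV : ∀ x a, Qstar x a = R x a + γ * ∑ x', P x a x' * Vstar x' := by
    intro x a
    rw [hQstar]
    congr 1
    congr 1
    exact Finset.sum_congr rfl (fun x' _ => by rw [hVstar])
  have hQstar_le : ∀ x a, Qstar x a ≤ Vstar x := by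
    intro x a; rw [hVstar]; exact hleA (Qstar x) a
  -- Step B : upper bound V k ≤ Vstar + γ^k p0
  obtain ⟨xp, hxp⟩ := Finite.exists_max (fun x => V 0 x - Vstar x)
  set p0 : ℝ := max (V 0 xp - Vstar xp) 0 with hp0def
  have hp0 : 0 ≤ p0 := le_max_right _ _
  have hp0' : ∀ x, V 0 x - Vstar x ≤ p0 := fun x => le_trans (hxp x) (le_max_left _ _)
  have claimB : ∀ k, ∀ x, V k x - Vstar x ≤ γ ^ k * p0 := by
    intro k
    induction k with
    | zero => intro x; simpa using hp0' x
    | succ k ih =>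
        intro x
        obtain ⟨a, ha⟩ := hVex (k+1) x
        have h1' := hup k x a
        have hsum : ∑ x', P x a x' * V k x' ≤ ∑ x', P x a x' * (Vstar x' + γ ^ k * p0) :=
          hsum_le x a _ _ (fun x' => by linarith [ih x'])
        rw [hsum_add x a Vstar (γ ^ k * p0)] at hsum
        have hγm := mul_le_mul_of_nonneg_left hsum hγ0
        have e1 : γ * ((∑ x', P x a x' * Vstar x') + γ ^ k * p0)
            = γ * (∑ x', P x a x' * Vstar x') + γ ^ (k+1) * p0 := by ring
        have hq := hQstarV x a
        have hq2 := hQstar_le x a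
        rw [ha]
        linarith [e1 ▸ hγm]
  have hpow_le_one : ∀ k : ℕ, γ ^ k ≤ 1 := fun k => pow_le_one₀ hγ0 hγ1.le
  have claimB' : ∀ k x, V k x ≤ Vstar x + p0 := by
    intro k x
    have h := claimB k x
    have : γ ^ k * p0 ≤ p0 := by
      have := mul_le_mul_of_nonneg_right (hpow_le_one k) hp0
      linarith
    linarith
  -- Step C : almost-monotonicity  V k - V (k+1) ≤ γ^k D0
  obtain ⟨xd, hxd⟩ := Finite.exists_max (fun x => V 0 x - V 1 x)
  set D0 : ℝ := max (V 0 xd - V 1 xd) 0 with hD0def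
  have hD0 : 0 ≤ D0 := le_max_right _ _
  have hD0' : ∀ x, V 0 x - V 1 x ≤ D0 := fun x => le_trans (hxd x) (le_max_left _ _)
  have claimC : ∀ k, ∀ x, V k x - V (k+1) x ≤ γ ^ k * D0 := by
    intro k
    induction k with
    | zero => intro x; simpa using hD0' x
    | succ k ih =>
        intro x
        obtain ⟨a, ha⟩ := hVex (k+1) x
        -- lower bound on V (k+2) x
        have hl := hlow (k+1) x a
        rw [← ha] at hl
        have hl2 : R x a + γ * (∑ x', P x a x' * V (k+1) x') ≤ V (k+2) x := by
          have := hVge (k+2) x a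
          have e : V (k+1) x - V (k+1) x = 0 := by ring
          rw [e, mul_zero] at hl
          calc R x a + γ * (∑ x', P x a x' * V (k+1) x')
              = R x a + γ * (∑ x', P x a x' * V (k+1) x') - 0 := by ring
            _ ≤ Q (k+1+1) x a := hl
            _ ≤ V (k+2) x := hVge (k+2) x a
        -- upper bound on V (k+1) x
        have hu : V (k+1) x ≤ R x a + γ * ∑ x', P x a x' * V k x' := by
          rw [ha]; exact hup k x a
        have hsum : ∑ x', P x a x' * V k x' ≤ ∑ x', P x a x' * (V (k+1) x' + γ ^ k * D0) :=
          hsum_le x a _ _ (fun x' => by linarith [ih x'])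
        rw [hsum_add x a (V (k+1)) (γ ^ k * D0)] at hsum
        have hγm := mul_le_mul_of_nonneg_left hsum hγ0
        have e1 : γ * ((∑ x', P x a x' * V (k+1) x') + γ ^ k * D0)
            = γ * (∑ x', P x a x' * V (k+1) x') + γ ^ (k+1) * D0 := by ring
        linarith [e1 ▸ hγm]
  -- Step D : convergence of V
  set c1 : ℝ := D0 / (1 - γ) with hc1def
  have hc1 : 0 ≤ c1 := div_nonneg hD0 (by linarith)
  have hc1e : ∀ k : ℕ, γ ^ k * c1 - γ ^ (k+1) * c1 = γ ^ k * D0 := by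
    intro k
    have : (1 - γ) * c1 = D0 := by
      rw [hc1def]; field_simp
    calc γ ^ k * c1 - γ ^ (k+1) * c1 = γ ^ k * ((1 - γ) * c1) := by ring
      _ = γ ^ k * D0 := by rw [this]
  have hmono : ∀ x, Monotone (fun k => V k x - γ ^ k * c1) := by
    intro x
    apply monotone_nat_of_le_succ
    intro k
    have h1' := claimC k x
    have h2' := hc1e k
    show V k x - γ ^ k * c1 ≤ V (k+1) x - γ ^ (k+1) * c1
    linarith
  have hbddW : ∀ x, BddAbove (Set.range (fun k => V k x - γ ^ k * c1)) := by
    intro x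
    refine ⟨Vstar x + p0, ?_⟩
    rintro y ⟨k, rfl⟩
    have h1' := claimB' k x
    have h2' : 0 ≤ γ ^ k * c1 := mul_nonneg (pow_nonneg hγ0 k) hc1
    show V k x - γ ^ k * c1 ≤ Vstar x + p0
    linarith
  set Vhat : X → ℝ := fun x => ⨆ k, (V k x - γ ^ k * c1) with hVhatdef
  have hWto : ∀ x, Tendsto (fun k => V k x - γ ^ k * c1) atTop (nhds (Vhat x)) := by
    intro x
    simpa only [hVhatdef] using tendsto_atTop_ciSup (hmono x) (hbddW x)
  have hVto : ∀ x, Tendsto (fun k => V k x) atTop (nhds (Vhat x)) := by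
    intro x
    have hpow : Tendsto (fun k : ℕ => γ ^ k * c1) atTop (nhds 0) := by
      simpa using (tendsto_pow_atTop_nhds_zero_of_lt_one hγ0 hγ1).mul_const c1
    have := (hWto x).add hpow
    simpa using this
  -- Vhat ≤ Vstar
  have hVhat_le : ∀ x, Vhat x ≤ Vstar x := by
    intro x
    have hpow : Tendsto (fun k : ℕ => Vstar x + γ ^ k * p0) atTop (nhds (Vstar x)) := by
      have : Tendsto (fun k : ℕ => γ ^ k * p0) atTop (nhds 0) := by
        simpa using (tendsto_pow_atTop_nhds_zero_of_lt_one hγ0 hγ1).mul_const p0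
      simpa using tendsto_const_nhds.add this
    exact le_of_tendsto_of_tendsto' (hVto x) hpow (fun k => by linarith [claimB k x])
  -- Step E : Bellman lower inequality for Vhat
  have hE : ∀ x a, R x a + γ * ∑ x', P x a x' * Vhat x' ≤ Vhat x := by
    intro x a
    have hrec : ∀ k, (R x a + γ * (∑ x', P x a x' * V k x') - α * V k x) + α * Q k x a
        ≤ Q (k+1) x a := by
      intro k
      have h := hlow k x a
      rw [mul_sub] at h
      linarith
    have hctend : Tendsto (fun k => R x a + γ * (∑ x', P x a x' * V k x') - α * V k x)
        atTop (nhds (R x a + γ * (∑ x', P x a x' * Vhat x') - α * Vhat x)) := by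
      apply Tendsto.sub
      · exact tendsto_const_nhds.add
          ((tendsto_finset_sum _ (fun x' _ => (hVto x').const_mul (P x a x'))).const_mul γ)
      · exact (hVto x).const_mul α
    have hres := alpha_rec_limit α hα0 hα1 (fun k => Q k x a)
      (fun k => R x a + γ * (∑ x', P x a x' * V k x') - α * V k x)
      (fun k => V k x)
      (R x a + γ * (∑ x', P x a x' * Vhat x') - α * Vhat x) (Vhat x)
      hrec hctend (fun k => hVge k x a) (hVto x)
    have e : (1 - α) * Vhat x = Vhat x - α * Vhat x := by ring
    linarith [e ▸ hres]
  -- Step F : Vhat ≥ Vstar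
  obtain ⟨x0, hx0⟩ := Finite.exists_min (fun x => Vhat x - Vstar x)
  have hx0' : ∀ x, Vhat x0 - Vstar x0 ≤ Vhat x - Vstar x := fun x => hx0 x
  have hm : 0 ≤ Vhat x0 - Vstar x0 := by
    obtain ⟨astar, hastar⟩ := hexA (Qstar x0)
    have hVs0 : Vstar x0 = Qstar x0 astar := by rw [hVstar]; exact hastar
    have hsum : ∑ x', P x0 astar x' * (Vstar x' + (Vhat x0 - Vstar x0))
        ≤ ∑ x', P x0 astar x' * Vhat x' :=
      hsum_le x0 astar _ _ (fun x' => by linarith [hx0' x'])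
    rw [hsum_add x0 astar Vstar (Vhat x0 - Vstar x0)] at hsum
    have hγm := mul_le_mul_of_nonneg_left hsum hγ0
    have hEe := hE x0 astar
    have hq := hQstarV x0 astar
    have e1 : γ * ((∑ x', P x0 astar x' * Vstar x') + (Vhat x0 - Vstar x0))
        = γ * (∑ x', P x0 astar x' * Vstar x') + γ * (Vhat x0 - Vstar x0) := by ring
    have hγm' : γ * (∑ x', P x0 astar x' * Vstar x') + γ * (Vhat x0 - Vstar x0)
        ≤ γ * ∑ x', P x0 astar x' * Vhat x' := by rw [← e1]; exact hγm
    have key : γ * (Vhat x0 - Vstar x0) ≤ Vhat x0 - Vstar x0 := by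
      linarith [hγm', hEe, hq, hVs0]
    by_contra hneg
    push_neg at hneg
    nlinarith [key, mul_neg_of_neg_of_pos hneg (show (0:ℝ) < 1 - γ by linarith)]
  have hVhat_eq : ∀ x, Vhat x = Vstar x := fun x =>
    le_antisymm (hVhat_le x) (by linarith [hx0' x, hm])
  intro x
  have := hVto x
  rw [hVhat_eq x] at this
  simpa only [hVdef] using this
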